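/- Let A ∈ ℝ^{n×n} be a symmetric matrix with spectral norm ‖A‖₂ ≤ 1, let g ∈ ℝ^n, let k be a positive integer, and let 0 ≤ ε ≤ 1/(2k²). Let ξ_1, …, ξ_k ∈ ℝ^n and define ṽ_0 = g, ṽ_1 = A g − ξ_1, and ṽ_j = 2(A ṽ_{j−1} − ξ_j) − ṽ_{j−2} for 2 ≤ j ≤ k, and assume ‖ξ_j‖₂ ≤ ε·‖ṽ_{j−1}‖₂ for every 1 ≤ j ≤ k. Then ‖T_k(A)g − ṽ_k‖₂ ≤ 2ε(k+1)²·‖g‖₂, and consequently |gᵀ T_k(A) g − gᵀ ṽ_k| ≤ 2ε(k+1)²·‖g‖₂². -/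

import Mathlib

open Matrix

/-- `T_k(A)`: the `k`-th Chebyshev polynomial of the first kind applied to a matrix `A`. -/
noncomputable def chebTMat {n : ℕ} (A : Matrix (Fin n) (Fin n) ℝ) (k : ℕ) :
    Matrix (Fin n) (Fin n) ℝ :=
  Polynomial.aeval A (Polynomial.Chebyshev.T ℝ (k : ℤ))

/-- The Euclidean norm of a vector in `ℝ^n`. -/
noncomputable def e2norm {n : ℕ} (v : Fin n → ℝ) : ℝ := Real.sqrt (∑ i, v i ^ 2)

namespace ChebAux

open Polynomial Polynomial.Chebyshev

variable {n : ℕ}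

lemma e2norm_eq_norm (v : Fin n → ℝ) :
    e2norm v = ‖(WithLp.equiv 2 (Fin n → ℝ)).symm v‖ := by
  rw [e2norm, EuclideanSpace.norm_eq]
  congr 1
  refine Finset.sum_congr rfl fun i _ => ?_
  rw [Real.norm_eq_abs, sq_abs]
  rfl

lemma e2norm_nonneg (v : Fin n → ℝ) : 0 ≤ e2norm v := Real.sqrt_nonneg _

lemma e2norm_zero : e2norm (0 : Fin n → ℝ) = 0 := by simp [e2norm]

lemma e2norm_add_le (u v : Fin n → ℝ) : e2norm (u + v) ≤ e2norm u + e2norm v := by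
  rw [e2norm_eq_norm, e2norm_eq_norm, e2norm_eq_norm]
  exact norm_add_le _ _

lemma e2norm_sub_le (u v : Fin n → ℝ) : e2norm (u - v) ≤ e2norm u + e2norm v := by
  rw [e2norm_eq_norm, e2norm_eq_norm, e2norm_eq_norm]
  exact norm_sub_le _ _

lemma e2norm_smul (c : ℝ) (v : Fin n → ℝ) : e2norm (c • v) = |c| * e2norm v := by
  rw [e2norm_eq_norm, e2norm_eq_norm]
  rw [show (WithLp.equiv 2 (Fin n → ℝ)).symm (c • v)
      = c • (WithLp.equiv 2 (Fin n → ℝ)).symm v from rfl]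
  rw [norm_smul, Real.norm_eq_abs]

lemma sq_e2norm (v : Fin n → ℝ) : e2norm v ^ 2 = v ⬝ᵥ v := by
  rw [e2norm, Real.sq_sqrt (Finset.sum_nonneg fun i _ => sq_nonneg _)]
  simp [dotProduct, sq]

lemma dp_abs_le (u v : Fin n → ℝ) : |u ⬝ᵥ v| ≤ e2norm u * e2norm v := by
  rw [e2norm_eq_norm, e2norm_eq_norm]
  have h : u ⬝ᵥ v = (inner ℝ ((WithLp.equiv 2 (Fin n → ℝ)).symm u)
      ((WithLp.equiv 2 (Fin n → ℝ)).symm v) : ℝ) := by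
    simp [dotProduct, PiLp.inner_apply, RCLike.inner_apply, conj_trivial, mul_comm]
  rw [h]
  exact abs_real_inner_le_norm _ _

/-- Pell-type identity for Chebyshev polynomials. -/
lemma pell (m : ℕ) : (T ℝ m) ^ 2 + (1 - X ^ 2) * (U ℝ ((m : ℤ) - 1)) ^ 2 = 1 := by
  induction m with
  | zero => simp
  | succ m ih =>
    have h1 : T ℝ ((m : ℤ) + 1) = X * T ℝ m - (1 - X ^ 2) * U ℝ ((m : ℤ) - 1) := by
      have h := T_eq_X_mul_T_sub_pol_U ℝ ((m : ℤ) - 1)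
      rw [show ((m:ℤ)-1)+2 = (m:ℤ)+1 by ring, show ((m:ℤ)-1)+1 = (m:ℤ) by ring] at h
      exact h
    have h2 : U ℝ (m : ℤ) = X * U ℝ ((m : ℤ) - 1) + T ℝ m := by
      have h := U_eq_X_mul_U_add_T ℝ ((m : ℤ) - 1)
      rw [show ((m:ℤ)-1)+1 = (m:ℤ) by ring] at h
      exact h
    push_cast
    simp only [add_sub_cancel_right]
    linear_combination (T ℝ ((m:ℤ)+1) + X * T ℝ m - (1 - X^2) * U ℝ ((m:ℤ)-1)) * h1 +
      (1 - X^2) * (U ℝ (m:ℤ) + X * U ℝ ((m:ℤ)-1) + T ℝ m) * h2 + ih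

lemma dot_mulVec_symm {A : Matrix (Fin n) (Fin n) ℝ} (hA : A.IsSymm) (u v : Fin n → ℝ) :
    A.mulVec u ⬝ᵥ v = u ⬝ᵥ A.mulVec v := by
  rw [Matrix.dotProduct_mulVec, ← Matrix.mulVec_transpose, hA.eq]

lemma aeval_isSymm {A : Matrix (Fin n) (Fin n) ℝ} (hA : A.IsSymm) (p : ℝ[X]) :
    (Polynomial.aeval A p).IsSymm := by
  rw [Polynomial.aeval_eq_sum_range]
  unfold Matrix.IsSymm
  rw [Matrix.transpose_sum]
  refine Finset.sum_congr rfl fun i _ => ?_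
  rw [Matrix.transpose_smul, Matrix.transpose_pow, hA.eq]

lemma chebTMat_zero (A : Matrix (Fin n) (Fin n) ℝ) : chebTMat A 0 = 1 := by
  simp [chebTMat]

lemma chebTMat_one (A : Matrix (Fin n) (Fin n) ℝ) : chebTMat A 1 = A := by
  simp [chebTMat]

lemma chebTMat_rec (A : Matrix (Fin n) (Fin n) ℝ) (m : ℕ) :
    chebTMat A (m + 2) = 2 * A * chebTMat A (m + 1) - chebTMat A m := by
  unfold chebTMat
  rw [show ((m + 2 : ℕ) : ℤ) = (m : ℤ) + 2 by push_cast; ring, T_add_two]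
  push_cast
  simp [map_sub, _root_.map_mul, map_ofNat]

lemma sqrt_aux (a b c : ℝ) (hb : 0 ≤ b) (hc : 0 ≤ c) :
    Real.sqrt ((a + b) ^ 2 + c) ≤ Real.sqrt (a ^ 2 + c) + b := by
  have hs := Real.sq_sqrt (by positivity : (0:ℝ) ≤ a ^ 2 + c)
  have hs0 := Real.sqrt_nonneg (a ^ 2 + c)
  have hsa : a ≤ Real.sqrt (a ^ 2 + c) := by nlinarith [hs, hs0]
  have key : (a + b) ^ 2 + c ≤ (Real.sqrt (a ^ 2 + c) + b) ^ 2 := by nlinarith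
  calc Real.sqrt ((a + b) ^ 2 + c) ≤ Real.sqrt ((Real.sqrt (a ^ 2 + c) + b) ^ 2) :=
        Real.sqrt_le_sqrt key
    _ = Real.sqrt (a ^ 2 + c) + b := Real.sqrt_sq (by positivity)

/-- `‖T_m(A) g‖ ≤ ‖g‖` for symmetric `A` with `‖A‖ ≤ 1`, via the Pell identity. -/
lemma cheb_mulVec_le {A : Matrix (Fin n) (Fin n) ℝ} (hA : A.IsSymm)
    (hAnorm : ∀ v : Fin n → ℝ, e2norm (A.mulVec v) ≤ e2norm v) (g : Fin n → ℝ) (m : ℕ) :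
    e2norm ((chebTMat A m).mulVec g) ≤ e2norm g := by
  set Tm := chebTMat A m with hTm
  set Um := Polynomial.aeval A (U ℝ ((m : ℤ) - 1)) with hUm
  have hTs : Tm.IsSymm := aeval_isSymm hA _
  have hUs : Um.IsSymm := aeval_isSymm hA _
  have hpell : Tm * Tm + (1 - A * A) * (Um * Um) = 1 := by
    have h := congrArg (Polynomial.aeval A) (pell m)
    simp [chebTMat, map_add, map_sub, map_pow, _root_.map_mul, _root_.map_one, sq] at h
    exact h
  set t := Tm.mulVec g with htv
  set w := Um.mulVec g with hwv
  have h1 : e2norm t ^ 2 = g ⬝ᵥ ((Tm * Tm).mulVec g) := by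
    rw [sq_e2norm, htv, dot_mulVec_symm hTs, mulVec_mulVec]
  have hcomm : (1 - A * A) * (Um * Um) = Um * ((1 - A * A) * Um) := by
    have hp : ((1 : ℝ[X]) - X * X) * (U ℝ ((m : ℤ) - 1) * U ℝ ((m : ℤ) - 1)) =
        U ℝ ((m : ℤ) - 1) * (((1 : ℝ[X]) - X * X) * U ℝ ((m : ℤ) - 1)) := by ring
    have h := congrArg (Polynomial.aeval A) hp
    simpa [map_sub, _root_.map_mul, _root_.map_one] using h
  have h2 : g ⬝ᵥ (((1 - A * A) * (Um * Um)).mulVec g) =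
      e2norm w ^ 2 - e2norm (A.mulVec w) ^ 2 := by
    rw [hcomm, ← mulVec_mulVec, ← dot_mulVec_symm hUs, ← hwv, ← mulVec_mulVec,
      Matrix.sub_mulVec, Matrix.one_mulVec, ← mulVec_mulVec, dotProduct_sub, ← hwv,
      dotProduct_comm w (A *ᵥ A *ᵥ w), dot_mulVec_symm hA (A *ᵥ w) w, sq_e2norm, sq_e2norm]
  have h3 : e2norm t ^ 2 + (e2norm w ^ 2 - e2norm (A.mulVec w) ^ 2) = e2norm g ^ 2 := by
    rw [h1, ← h2, ← dotProduct_add, ← Matrix.add_mulVec, hpell, Matrix.one_mulVec, sq_e2norm]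
  have h4 : e2norm (A.mulVec w) ^ 2 ≤ e2norm w ^ 2 :=
    pow_le_pow_left₀ (e2norm_nonneg _) (hAnorm w) 2
  nlinarith [e2norm_nonneg t, e2norm_nonneg g]

end ChebAux

open ChebAux in
theorem cheb_recurrence_stability (n : ℕ) (A : Matrix (Fin n) (Fin n) ℝ)
    (hA : A.IsSymm) (hAnorm : ∀ v : Fin n → ℝ, e2norm (A.mulVec v) ≤ e2norm v)
    (g : Fin n → ℝ) (k : ℕ) (hk : 0 < k)
    (ε : ℝ) (hε0 : 0 ≤ ε) (hε1 : ε ≤ 1 / (2 * (k : ℝ) ^ 2))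
    (ξ : ℕ → Fin n → ℝ) (vt : ℕ → Fin n → ℝ)
    (h0 : vt 0 = g)
    (h1 : vt 1 = A.mulVec g - ξ 1)
    (hrec : ∀ j, 2 ≤ j → j ≤ k →
      vt j = (2 : ℝ) • (A.mulVec (vt (j - 1)) - ξ j) - vt (j - 2))
    (hξ : ∀ j, 1 ≤ j → j ≤ k → e2norm (ξ j) ≤ ε * e2norm (vt (j - 1))) :
    e2norm ((chebTMat A k).mulVec g - vt k) ≤ 2 * ε * ((k : ℝ) + 1) ^ 2 * e2norm g ∧
    |g ⬝ᵥ (chebTMat A k).mulVec g - g ⬝ᵥ vt k| ≤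
      2 * ε * ((k : ℝ) + 1) ^ 2 * e2norm g ^ 2 := by
  have hgn := e2norm_nonneg g
  have hknz : (0:ℝ) < (k:ℝ) := by exact_mod_cast hk
  set t : ℕ → Fin n → ℝ := fun j => (chebTMat A j).mulVec g with ht
  set e : ℕ → Fin n → ℝ := fun j => t j - vt j with he
  have htle : ∀ j, e2norm (t j) ≤ e2norm g := fun j => cheb_mulVec_le hA hAnorm g j
  have he0 : e 0 = 0 := by simp [he, ht, chebTMat_zero, Matrix.one_mulVec, h0]
  have he1 : e 1 = ξ 1 := by simp [he, ht, chebTMat_one, h1]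
  have herec : ∀ m : ℕ, m + 2 ≤ k →
      e (m + 2) = ((2:ℝ) • (A.mulVec (e (m + 1))) - e m) + (2:ℝ) • ξ (m + 2) := by
    intro m hm
    have hv := hrec (m + 2) (by omega) hm
    simp only [show m + 2 - 1 = m + 1 from rfl, show m + 2 - 2 = m from rfl] at hv
    have htr : t (m + 2) = (2:ℝ) • (A.mulVec (t (m + 1))) - t m := by
      show (chebTMat A (m + 2)).mulVec g = _
      rw [chebTMat_rec, Matrix.sub_mulVec,
        show (2 : Matrix (Fin n) (Fin n) ℝ) * A * chebTMat A (m + 1)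
          = (2:ℝ) • (A * chebTMat A (m + 1)) by rw [two_mul, add_mul, two_smul],
        Matrix.smul_mulVec, ← mulVec_mulVec]
    show t (m + 2) - vt (m + 2) = _
    rw [htr, hv, show e (m + 1) = t (m + 1) - vt (m + 1) from rfl,
      show e m = t m - vt m from rfl, Matrix.mulVec_sub]
    module
  -- the invariant quadratic form for the pair (e (j+1), e j)
  set q : ℕ → ℝ := fun j => e2norm (e (j + 1) - A.mulVec (e j)) ^ 2 +
      (e2norm (e j) ^ 2 - e2norm (A.mulVec (e j)) ^ 2) with hqdef
  have hc_nonneg : ∀ v : Fin n → ℝ, 0 ≤ e2norm v ^ 2 - e2norm (A.mulVec v) ^ 2 := by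
    intro v
    have := pow_le_pow_left₀ (e2norm_nonneg (A.mulVec v)) (hAnorm v) 2
    linarith
  have hEstep : ∀ j, e2norm (e (j + 1)) ≤ e2norm (e j) + Real.sqrt (q j) := by
    intro j
    have hdec : e (j + 1) = A.mulVec (e j) + (e (j + 1) - A.mulVec (e j)) := by abel
    have h3 : e2norm (e (j + 1) - A.mulVec (e j)) ≤ Real.sqrt (q j) := by
      rw [show e2norm (e (j + 1) - A.mulVec (e j))
          = Real.sqrt (e2norm (e (j + 1) - A.mulVec (e j)) ^ 2) from
          (Real.sqrt_sq (e2norm_nonneg _)).symm]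
      exact Real.sqrt_le_sqrt (le_add_of_nonneg_right (hc_nonneg _))
    calc e2norm (e (j + 1)) = e2norm (A.mulVec (e j) + (e (j + 1) - A.mulVec (e j))) := by
          rw [← hdec]
      _ ≤ e2norm (A.mulVec (e j)) + e2norm (e (j + 1) - A.mulVec (e j)) := e2norm_add_le _ _
      _ ≤ e2norm (e j) + Real.sqrt (q j) := add_le_add (hAnorm _) h3
  have hq0 : Real.sqrt (q 0) ≤ ε * e2norm g := by
    have hq0v : q 0 = e2norm (ξ 1) ^ 2 := by
      simp [hqdef, he0, he1, Matrix.mulVec_zero, e2norm_zero, sub_zero]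
    rw [hq0v, Real.sqrt_sq (e2norm_nonneg _)]
    have := hξ 1 le_rfl hk
    rwa [show (1:ℕ) - 1 = 0 from rfl, h0] at this
  have hqstep : ∀ m : ℕ, m + 2 ≤ k →
      Real.sqrt (q (m + 1)) ≤ Real.sqrt (q m) + 2 * e2norm (ξ (m + 2)) := by
    intro m hm
    have hd : e (m + 2) - A.mulVec (e (m + 1)) =
        (A.mulVec (e (m + 1)) - e m) + (2:ℝ) • ξ (m + 2) := by
      rw [herec m hm]; module
    set a := e2norm (A.mulVec (e (m + 1)) - e m) with hadef
    set b := 2 * e2norm (ξ (m + 2)) with hbdef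
    set c := e2norm (e (m + 1)) ^ 2 - e2norm (A.mulVec (e (m + 1))) ^ 2 with hcdef
    have hb : 0 ≤ b := mul_nonneg (by norm_num) (e2norm_nonneg _)
    have hr : e2norm (e (m + 2) - A.mulVec (e (m + 1))) ≤ a + b := by
      rw [hd]
      refine le_trans (e2norm_add_le _ _) ?_
      rw [e2norm_smul]
      norm_num [hbdef, hadef]
    have h1 : Real.sqrt (q (m + 1)) ≤ Real.sqrt ((a + b) ^ 2 + c) := by
      apply Real.sqrt_le_sqrt
      simp only [hqdef]
      have : e2norm (e (m + 2) - A.mulVec (e (m + 1))) ^ 2 ≤ (a + b) ^ 2 :=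
        pow_le_pow_left₀ (e2norm_nonneg _) hr 2
      linarith
    have h2 := sqrt_aux a b c hb (hc_nonneg _)
    have h3 : a ^ 2 + c = q m := by
      simp only [hadef, hcdef, hqdef, sq_e2norm, sub_dotProduct, dotProduct_sub]
      have k1 := dot_mulVec_symm hA (e (m + 1)) (e m)
      have k2 := dotProduct_comm (e m) (A.mulVec (e (m + 1)))
      have k3 := dotProduct_comm (A.mulVec (e m)) (e (m + 1))
      linarith
    rw [h3] at h2
    linarith
  -- the main induction
  have key : ∀ j, j ≤ k → (e2norm (e j) ≤ 2 * ε * (j:ℝ) ^ 2 * e2norm g ∧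
      ∀ i : ℕ, j = i + 1 → Real.sqrt (q i) ≤ ε * (4 * (j:ℝ) - 3) * e2norm g) := by
    intro j
    induction j using Nat.strong_induction_on with
    | _ j ih =>
      intro hjk
      match j with
      | 0 =>
        refine ⟨?_, fun i hi => by omega⟩
        rw [he0, e2norm_zero]
        positivity
      | 1 =>
        have hE : e2norm (e 1) ≤ ε * e2norm g := by
          rw [he1]
          have := hξ 1 le_rfl hjk
          rwa [show (1:ℕ) - 1 = 0 from rfl, h0] at this
        refine ⟨by push_cast; nlinarith [mul_nonneg hε0 hgn], fun i hi => ?_⟩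
        have hii : i = 0 := by omega
        subst hii
        calc Real.sqrt (q 0) ≤ ε * e2norm g := hq0
          _ ≤ ε * (4 * ((1:ℕ):ℝ) - 3) * e2norm g := by norm_num
      | (m + 2) =>
        obtain ⟨IH_E, IH_q⟩ := ih (m + 1) (by omega) (by omega)
        have hq_prev : Real.sqrt (q m) ≤ ε * (4 * ((m:ℝ) + 1) - 3) * e2norm g := by
          have := IH_q m rfl
          push_cast at this ⊢
          convert this using 2
        have hmk : ((m:ℝ) + 1) ≤ (k:ℝ) := by exact_mod_cast (by omega : m + 1 ≤ k)
        have hIHE : e2norm (e (m + 1)) ≤ 2 * ε * ((m:ℝ) + 1) ^ 2 * e2norm g := by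
          push_cast at IH_E ⊢
          convert IH_E using 2
        have h3 : e2norm (e (m + 1)) ≤ e2norm g := by
          have hcalc : 2 * ε * ((m:ℝ) + 1) ^ 2 ≤ 1 := by
            have h2k : 0 < 2 * (k:ℝ) ^ 2 := by positivity
            rw [le_div_iff₀ h2k] at hε1
            nlinarith
          nlinarith
        have hxi : e2norm (ξ (m + 2)) ≤ 2 * ε * e2norm g := by
          have hx1 := hξ (m + 2) (by omega) hjk
          rw [show m + 2 - 1 = m + 1 from rfl] at hx1
          have hx2 : e2norm (vt (m + 1)) ≤ e2norm (t (m + 1)) + e2norm (e (m + 1)) := by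
            have hvt : vt (m + 1) = t (m + 1) - e (m + 1) := by
              rw [show e (m + 1) = t (m + 1) - vt (m + 1) from rfl]; abel
            rw [hvt]
            exact e2norm_sub_le _ _
          have := htle (m + 1)
          nlinarith
        have hqnew : Real.sqrt (q (m + 1)) ≤ ε * (4 * ((m:ℝ) + 2) - 3) * e2norm g := by
          have := hqstep m hjk
          nlinarith
        constructor
        · have hstep := hEstep (m + 1)
          push_cast
          nlinarith
        · intro i hi
          have hii : i = m + 1 := by omega
          subst hii
          push_cast
          convert hqnew using 2
  obtain ⟨hEk, -⟩ := key k le_rfl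
  have hfin : e2norm (e k) ≤ 2 * ε * ((k:ℝ) + 1) ^ 2 * e2norm g := by nlinarith [mul_nonneg hε0 hgn, hknz]
  constructor
  · exact hfin
  · have hdp : g ⬝ᵥ (chebTMat A k).mulVec g - g ⬝ᵥ vt k = g ⬝ᵥ e k := by
      rw [show e k = t k - vt k from rfl, dotProduct_sub]
    rw [hdp]
    calc |g ⬝ᵥ e k| ≤ e2norm g * e2norm (e k) := dp_abs_le _ _
      _ ≤ 2 * ε * ((k : ℝ) + 1) ^ 2 * e2norm g ^ 2 := by nlinarith
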